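/- If N is a Midy pseudoprime to base b, then N is a Midy pseudoprime to base b^t for every positive integer t (with b^t considered modulo N). -/

import Mathlib

/-- The multiplicative order of `b` modulo `N`. -/
noncomputable def ord (b N : ℕ) : ℕ := orderOf (b : ZMod N)

/-- `N` is a Midy pseudoprime to base `b`: `N` is odd composite, coprime to `b` and to
`|b|_N`, and `|b|_N = |b|_p` for every prime `p ∣ N` (equivalent characterization). -/
def MidyPsp (b N : ℕ) : Prop :=
  Odd N ∧ 1 < N ∧ ¬ N.Prime ∧ Nat.Coprime N b ∧ Nat.Coprime N (ord b N) ∧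
    ∀ p : ℕ, p.Prime → p ∣ N → ord b N = ord b p

lemma cast_pow_mod (b t N m : ℕ) (hm : m ∣ N) :
    ((b ^ t % N : ℕ) : ZMod m) = (b : ZMod m) ^ t := by
  conv_rhs => rw [show (b : ZMod m) ^ t = ((b ^ t : ℕ) : ZMod m) by push_cast; ring]
  conv_rhs => rw [← Nat.div_add_mod (b ^ t) N]
  push_cast
  rw [(ZMod.natCast_eq_zero_iff N m).mpr hm]
  ring

theorem stmt15 (b N : ℕ) (h : MidyPsp b N) :
    ∀ t : ℕ, 1 ≤ t → MidyPsp (b ^ t % N) N := by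
  intro t ht
  obtain ⟨hodd, hN, hnp, hcb, hco, hall⟩ := h
  have key : ∀ m : ℕ, m ∣ N → ord (b ^ t % N) m = ord b m / Nat.gcd (ord b m) t := by
    intro m hm
    rw [ord, cast_pow_mod b t N m hm, orderOf_pow' _ (by omega : t ≠ 0)]
    rfl
  have hdvd : ord (b ^ t % N) N ∣ ord b N := by
    rw [key N dvd_rfl]; exact Nat.div_dvd_of_dvd (Nat.gcd_dvd_left _ _)
  refine ⟨hodd, hN, hnp, ?_, hco.coprime_dvd_right hdvd, ?_⟩
  · have : Nat.Coprime N (b ^ t) := hcb.pow_right t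
    have h2 : Nat.gcd N (b ^ t % N) = Nat.gcd N (b ^ t) := by
      rw [Nat.gcd_comm, ← Nat.gcd_rec]
    exact (Nat.Coprime.eq_1 _ _).mpr (h2.trans this)
  · intro p hp hpN
    rw [key N dvd_rfl, key p hpN, hall p hp hpN]
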